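/- arXiv:0804.1048 — 4 statements merged into one kernel-verified Lean document; each statement's English description precedes it below -/
import Mathlib

section
/- Let A be a unital Banach algebra over ℝ (a complete normed ring with ‖x·y‖ ≤ ‖x‖·‖y‖ and ‖1‖ = 1). Let F, V ∈ A satisfy F² = 1, F·V + V·F + V² = 0, ‖F·V‖ < 1 and ‖V·V‖ < 4. Then ∑_{n=1}^∞ ((−1)^{n+1}/n) • (F·V)ⁿ = ∑_{n=0}^∞ ((n!)²/(2n+1)!) • (F·V^{2n+1} + (1/2)•V^{2n+2}), both series converging absolutely. -/
open MeasureTheory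

namespace Stmt4Aux

lemma beta_nat (a b : ℕ) : ∫ x in (0:ℝ)..1, x ^ a * (1 - x) ^ b
    = (a.factorial : ℝ) * b.factorial / (a + b + 1).factorial := by
  have h := Complex.Gamma_mul_Gamma_eq_betaIntegral
    (s := (a : ℂ) + 1) (t := (b : ℂ) + 1) (by simp; positivity) (by simp; positivity)
  rw [Complex.Gamma_nat_eq_factorial, Complex.Gamma_nat_eq_factorial] at h
  have h2 : ((a : ℂ) + 1) + ((b : ℂ) + 1) = ((a + b + 1 : ℕ) : ℂ) + 1 := by push_cast; ring
  rw [h2, Complex.Gamma_nat_eq_factorial] at h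
  have h3 : Complex.betaIntegral ((a : ℂ) + 1) ((b : ℂ) + 1)
      = ((∫ x in (0:ℝ)..1, x ^ a * (1 - x) ^ b : ℝ) : ℂ) := by
    rw [Complex.betaIntegral, ← intervalIntegral.integral_ofReal]
    refine intervalIntegral.integral_congr fun x hx => ?_
    simp only [add_sub_cancel_right]
    rw [Complex.cpow_natCast, Complex.cpow_natCast]
    push_cast
    ring
  rw [h3] at h
  have hr : (a.factorial : ℝ) * b.factorial
      = ((a + b + 1).factorial : ℝ) * ∫ x in (0:ℝ)..1, x ^ a * (1 - x) ^ b := by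
    exact_mod_cast h
  have hc : ((a + b + 1).factorial : ℝ) ≠ 0 := by
    exact_mod_cast (a + b + 1).factorial_ne_zero
  rw [eq_div_iff hc, mul_comm]
  exact hr.symm

variable {A : Type*} [Ring A] [Algebra ℝ A] (F V : A)

lemma hVF' (hflat : F * V + V * F + V * V = 0) : V * F = -(F * V) - V * V := by
  have h : V * F + (F * V + V * V) = 0 := by rw [← hflat]; abel
  have := eq_neg_of_add_eq_zero_left h
  rw [this]; abel

lemma hVVF (hflat : F * V + V * F + V * V = 0) : V * V * F = F * (V * V) := by
  have h1 : V * V * F = V * (V * F) := by rw [mul_assoc]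
  rw [h1, hVF' F V hflat, mul_sub, mul_neg, ← mul_assoc, hVF' F V hflat]
  noncomm_ring

lemma hcomm (hflat : F * V + V * F + V * V = 0) :
    (F * V) * (V * V) = (V * V) * (F * V) := by
  have h : (V * V) * (F * V) = ((V * V) * F) * V := by noncomm_ring
  rw [h, hVVF F V hflat]; noncomm_ring

lemma hkey (hF : F * F = 1) (hflat : F * V + V * F + V * V = 0) :
    V * V + (V * V) * (F * V) + (F * V) * (F * V) = 0 := by
  have h1 : (F * V) * (F * V) = F * ((V * F) * V) := by noncomm_ring
  have h2 : (V * V) * (F * V) = ((V * V) * F) * V := by noncomm_ring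
  rw [h1, hVF' F V hflat, h2, hVVF F V hflat]
  have h3 : F * ((-(F * V) - V * V) * V) = -((F * F) * (V * V)) - F * (V * V) * V := by
    noncomm_ring
  rw [h3, hF]
  noncomm_ring

lemma poly (hF : F * F = 1) (hflat : F * V + V * F + V * V = 0) (t : ℝ) :
    (F * V) * (1 - (t * (1 - t)) • (V * V))
      = (1 - (-t) • (F * V)) * (F * V + t • (V * V)) := by
  have hXX : (F * V) * (F * V) = -(V * V) - (V * V) * (F * V) := by
    linear_combination (norm := noncomm_ring) hkey F V hF hflat
  simp only [mul_sub, sub_mul, mul_add, add_mul, one_mul, mul_one, smul_mul_assoc,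
    mul_smul_comm, smul_smul, hXX, hcomm F V hflat]
  match_scalars <;> ring

lemma sandwich {A : Type*} [Ring A] (a b x bb yy ww : A) (h1 : a * (1 - yy) = 1)
    (h2 : (1 - ww) * b = 1) (hp : x * (1 - ww) = (1 - yy) * bb) : a * x = bb * b := by
  calc a * x = a * (x * ((1 - ww) * b)) := by rw [h2, mul_one]
    _ = a * ((x * (1 - ww)) * b) := by rw [mul_assoc]
    _ = a * (((1 - yy) * bb) * b) := by rw [hp]
    _ = (a * (1 - yy)) * (bb * b) := by noncomm_ring
    _ = bb * b := by rw [h1, one_mul]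

lemma VV_pow (V : A) (k : ℕ) : (V * V) ^ k = V ^ (2 * k) := by rw [pow_mul, sq]

lemma FV_VV_pow (F V : A) (k : ℕ) : (F * V) * (V * V) ^ k = F * V ^ (2 * k + 1) := by
  rw [VV_pow, mul_assoc, ← pow_succ']

lemma VV_pow_succ (V : A) (k : ℕ) : (V * V) ^ (k + 1) = V ^ (2 * k + 2) := by
  have h : 2 * (k + 1) = 2 * k + 2 := by ring
  rw [VV_pow, h]

/-- summand of the logarithm series, as a function of the integration variable -/
def ff (F V : A) (k : ℕ) (t : ℝ) : A := ((-1:ℝ) ^ k * t ^ k) • (F * V) ^ (k + 1)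

/-- summand of the eta-cochain series, as a function of the integration variable -/
def gg (F V : A) (k : ℕ) (t : ℝ) : A :=
  (t ^ k * (1 - t) ^ k) • (F * V ^ (2 * k + 1)) + (t ^ (k + 1) * (1 - t) ^ k) • V ^ (2 * k + 2)

end Stmt4Aux

section Pointwise

open Stmt4Aux

variable {A : Type*} [NormedRing A] [NormedAlgebra ℝ A] [CompleteSpace A]

lemma stmt4_pointwise (F V : A) (hF : F * F = 1)
    (hflat : F * V + V * F + V * V = 0) (hFV : ‖F * V‖ < 1) (hVV : ‖V * V‖ < 4)
    {t : ℝ} (ht : t ∈ Set.Ioc (0:ℝ) 1) :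
    ∑' k : ℕ, ff F V k t = ∑' k : ℕ, gg F V k t := by
  obtain ⟨ht0, ht1⟩ := ht
  have hy : ‖(-t) • (F * V)‖ < 1 := by
    rw [norm_smul, Real.norm_eq_abs, abs_neg, abs_of_pos ht0]
    calc t * ‖F * V‖ ≤ 1 * ‖F * V‖ := mul_le_mul_of_nonneg_right ht1 (norm_nonneg _)
      _ < 1 := by rw [one_mul]; exact hFV
  have hw : ‖(t * (1 - t)) • (V * V)‖ < 1 := by
    rw [norm_smul, Real.norm_eq_abs,
      abs_of_nonneg (mul_nonneg ht0.le (by linarith) : (0:ℝ) ≤ t * (1 - t))]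
    have h14 : t * (1 - t) ≤ 1/4 := by nlinarith [sq_nonneg (t - 1/2)]
    calc t * (1 - t) * ‖V * V‖ ≤ (1/4) * ‖V * V‖ :=
          mul_le_mul_of_nonneg_right h14 (norm_nonneg _)
      _ < 1 := by linarith
  have hsy := summable_geometric_of_norm_lt_one hy
  have hsw := summable_geometric_of_norm_lt_one hw
  have h1 : (∑' k : ℕ, ((-t) • (F * V)) ^ k) * (1 - (-t) • (F * V)) = 1 :=
    geom_series_mul_neg _ hy
  have h2 : (1 - (t * (1 - t)) • (V * V)) * (∑' k : ℕ, ((t * (1 - t)) • (V * V)) ^ k) = 1 :=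
    mul_neg_geom_series _ hw
  have hpoly := poly F V hF hflat t
  calc (∑' k : ℕ, ff F V k t)
      = ∑' k : ℕ, ((-t) • (F * V)) ^ k * (F * V) := by
        refine tsum_congr fun k => ?_
        simp only [ff]
        rw [smul_pow, smul_mul_assoc, ← pow_succ]
        match_scalars <;> ring
    _ = (∑' k : ℕ, ((-t) • (F * V)) ^ k) * (F * V) := hsy.tsum_mul_right _
    _ = (F * V + t • (V * V)) * (∑' k : ℕ, ((t * (1 - t)) • (V * V)) ^ k) :=
        sandwich _ _ _ _ _ _ h1 h2 hpoly
    _ = ∑' k : ℕ, (F * V + t • (V * V)) * ((t * (1 - t)) • (V * V)) ^ k :=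
        (hsw.tsum_mul_left _).symm
    _ = ∑' k : ℕ, gg F V k t := by
        refine tsum_congr fun k => ?_
        simp only [gg]
        rw [smul_pow, mul_smul_comm, add_mul, FV_VV_pow, smul_mul_assoc, ← pow_succ',
          VV_pow_succ, smul_add, smul_smul, mul_pow]
        match_scalars <;> ring

end Pointwise

open Stmt4Aux

/-- The power-series identity
`ln(1+FV) = Σ_{n≥0} (n!)²/(2n+1)! (F·V^{2n+1} + ½·V^{2n+2})`
for a flat pair `(F,V)` (`F² = 1`, `F·V + V·F + V² = 0`) in a unital Banach
algebra over ℝ, under the convergence assumptions `‖F·V‖ < 1` and `‖V·V‖ < 4`. -/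
theorem stmt_4 (A : Type*) [NormedRing A] [NormOneClass A] [NormedAlgebra ℝ A]
    [CompleteSpace A] (F V : A) (hF : F * F = 1)
    (hflat : F * V + V * F + V * V = 0)
    (hFV : ‖F * V‖ < 1) (hVV : ‖V * V‖ < 4) :
    Summable (fun n : ℕ => ‖(((-1 : ℝ) ^ n / (n + 1)) • (F * V) ^ (n + 1) : A)‖) ∧
    Summable (fun n : ℕ =>
      ‖((((n.factorial : ℝ) ^ 2 / ((2 * n + 1).factorial : ℝ)) •
          (F * V ^ (2 * n + 1) + (1 / 2 : ℝ) • V ^ (2 * n + 2))) : A)‖) ∧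
    ∑' n : ℕ, ((-1 : ℝ) ^ n / (n + 1)) • (F * V) ^ (n + 1)
      = ∑' n : ℕ, ((n.factorial : ℝ) ^ 2 / ((2 * n + 1).factorial : ℝ)) •
          (F * V ^ (2 * n + 1) + (1 / 2 : ℝ) • V ^ (2 * n + 2)) := by
  have hVVnn : (0:ℝ) ≤ ‖V * V‖ := norm_nonneg _
  have hq1 : ‖V * V‖ / 4 < 1 := by linarith
  have hqnn : (0:ℝ) ≤ ‖V * V‖ / 4 := by linarith
  -- power facts
  have hVk : ∀ k : ℕ, (V * V) ^ k = V ^ (2 * k) := fun k => by rw [pow_mul, sq]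
  have hpow_odd : ∀ k : ℕ, (F * V) * (V * V) ^ k = F * V ^ (2 * k + 1) := by
    intro k
    rw [hVk, mul_assoc, ← pow_succ']
  have hVk2 : ∀ k : ℕ, (V * V) ^ (k + 1) = V ^ (2 * k + 2) := by
    intro k
    have h : 2 * (k + 1) = 2 * k + 2 := by ring
    rw [hVk, h]
  -- geometric summabilities
  have hgeom1 : Summable (fun n : ℕ => ‖F * V‖ ^ (n + 1)) := by
    simpa only [← pow_succ'] using
      (summable_geometric_of_lt_one (norm_nonneg (F * V)) hFV).mul_left ‖F * V‖
  -- first summability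
  have S1 : Summable (fun n : ℕ => ‖(((-1 : ℝ) ^ n / (n + 1)) • (F * V) ^ (n + 1) : A)‖) := by
    refine Summable.of_nonneg_of_le (fun n => norm_nonneg _) (fun n => ?_) hgeom1
    rw [norm_smul]
    have h1 : ‖((-1:ℝ) ^ n / (n + 1))‖ ≤ 1 := by
      rw [Real.norm_eq_abs, abs_div, abs_pow, abs_neg, abs_one, one_pow,
        abs_of_nonneg (by positivity)]
      rw [div_le_one (by positivity)]
      linarith [Nat.cast_nonneg (α := ℝ) n]
    calc ‖((-1:ℝ) ^ n / (n + 1))‖ * ‖(F * V) ^ (n + 1)‖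
        ≤ 1 * ‖(F * V) ^ (n + 1)‖ := by
          exact mul_le_mul_of_nonneg_right h1 (norm_nonneg _)
      _ = ‖(F * V) ^ (n + 1)‖ := one_mul _
      _ ≤ ‖F * V‖ ^ (n + 1) := norm_pow_le' _ (Nat.succ_pos n)
  -- factorial coefficient bound
  have hcb : ∀ n : ℕ, ((n.factorial : ℝ) ^ 2 / ((2 * n + 1).factorial : ℝ)) ≤ (1/4) ^ n := by
    intro n
    induction n with
    | zero => norm_num [Nat.factorial]
    | succ k ih =>
      have hfp : (0:ℝ) < ((2 * k + 1).factorial : ℝ) := by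
        exact_mod_cast Nat.factorial_pos _
      have e1 : (((k+1).factorial : ℝ)) = (k+1) * k.factorial := by
        exact_mod_cast Nat.factorial_succ k
      have e2 : (((2 * (k+1) + 1).factorial : ℝ))
          = (2*k+3) * ((2*k+2) * ((2 * k + 1).factorial : ℝ)) := by
        have h23 : 2 * (k+1) + 1 = (2*k+2) + 1 := by ring
        rw [h23, Nat.factorial_succ]
        have h22 : 2*k+2 = (2*k+1) + 1 := by ring
        rw [h22, Nat.factorial_succ]
        push_cast
        ring
      have h2 : (k.factorial : ℝ)^2 ≤ (1/4)^k * ((2 * k + 1).factorial : ℝ) :=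
        (div_le_iff₀ hfp).1 ih
      rw [e1, e2]
      rw [div_le_iff₀ (by positivity)]
      have hk0 : (0:ℝ) ≤ (k:ℝ) := Nat.cast_nonneg k
      have t1 : ((k:ℝ)+1)^2 * ((k.factorial : ℝ))^2
          ≤ ((k:ℝ)+1)^2 * ((1/4)^k * ((2 * k + 1).factorial : ℝ)) := by
        exact mul_le_mul_of_nonneg_left h2 (by positivity)
      have t2 : ((k:ℝ)+1)^2 * ((1/4)^k * ((2 * k + 1).factorial : ℝ))
          ≤ ((2*(k:ℝ)+3) * (2*(k:ℝ)+2) / 4) * ((1/4)^k * ((2 * k + 1).factorial : ℝ)) := by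
        refine mul_le_mul_of_nonneg_right (by nlinarith) (by positivity)
      calc (((k:ℝ)+1) * k.factorial)^2
          = ((k:ℝ)+1)^2 * ((k.factorial : ℝ))^2 := by ring
        _ ≤ ((2*(k:ℝ)+3) * (2*(k:ℝ)+2) / 4) * ((1/4)^k * ((2 * k + 1).factorial : ℝ)) :=
            le_trans t1 t2
        _ = (1/4)^(k+1) * ((2*(k:ℝ)+3) * ((2*(k:ℝ)+2) * ((2 * k + 1).factorial : ℝ))) := by
            rw [pow_succ]; ring
  -- second summability
  have hgeomq : Summable (fun n : ℕ => (‖F * V‖ + ‖V * V‖ / 2) * (‖V * V‖ / 4) ^ n) :=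
    (summable_geometric_of_lt_one hqnn hq1).mul_left _
  have hterm2 : ∀ n : ℕ,
      ‖((((n.factorial : ℝ) ^ 2 / ((2 * n + 1).factorial : ℝ)) •
          (F * V ^ (2 * n + 1) + (1 / 2 : ℝ) • V ^ (2 * n + 2))) : A)‖
        ≤ (‖F * V‖ + ‖V * V‖ / 2) * (‖V * V‖ / 4) ^ n := by
    intro n
    have hcnn : (0:ℝ) ≤ (n.factorial : ℝ) ^ 2 / ((2 * n + 1).factorial : ℝ) := by positivity
    have hn1 : ‖F * V ^ (2 * n + 1)‖ ≤ ‖F * V‖ * ‖V * V‖ ^ n := by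
      rw [← hpow_odd n]
      calc ‖(F * V) * (V * V) ^ n‖ ≤ ‖F * V‖ * ‖(V * V) ^ n‖ := norm_mul_le _ _
        _ ≤ ‖F * V‖ * ‖V * V‖ ^ n := by
            exact mul_le_mul_of_nonneg_left (norm_pow_le _ _) (norm_nonneg _)
    have hn2 : ‖(V : A) ^ (2 * n + 2)‖ ≤ ‖V * V‖ ^ (n + 1) := by
      rw [← hVk2 n]
      exact norm_pow_le _ _
    rw [norm_smul, Real.norm_eq_abs, abs_of_nonneg hcnn]
    calc ((n.factorial : ℝ) ^ 2 / ((2 * n + 1).factorial : ℝ)) *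
          ‖F * V ^ (2 * n + 1) + (1 / 2 : ℝ) • V ^ (2 * n + 2)‖
        ≤ (1/4)^n * (‖F * V‖ * ‖V * V‖ ^ n + (1/2) * ‖V * V‖ ^ (n + 1)) := by
          refine mul_le_mul (hcb n) ?_ (norm_nonneg _) (by positivity : (0:ℝ) ≤ (1/4:ℝ)^n)
          calc ‖F * V ^ (2 * n + 1) + (1 / 2 : ℝ) • V ^ (2 * n + 2)‖
              ≤ ‖F * V ^ (2 * n + 1)‖ + ‖(1 / 2 : ℝ) • (V : A) ^ (2 * n + 2)‖ :=
                norm_add_le _ _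
            _ ≤ ‖F * V‖ * ‖V * V‖ ^ n + (1/2) * ‖V * V‖ ^ (n + 1) := by
                rw [norm_smul]
                refine add_le_add hn1 ?_
                rw [Real.norm_eq_abs, abs_of_nonneg (by norm_num : (0:ℝ) ≤ 1/2)]
                exact mul_le_mul_of_nonneg_left hn2 (by norm_num)
      _ = ‖F * V‖ * ((1/4) ^ n * ‖V * V‖ ^ n)
            + ‖V * V‖ / 2 * ((1/4) ^ n * ‖V * V‖ ^ n) := by ring
      _ = (‖F * V‖ + ‖V * V‖ / 2) * (‖V * V‖ / 4) ^ n := by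
          simp only [div_pow, one_pow]
          ring
  have S2 : Summable (fun n : ℕ =>
      ‖((((n.factorial : ℝ) ^ 2 / ((2 * n + 1).factorial : ℝ)) •
          (F * V ^ (2 * n + 1) + (1 / 2 : ℝ) • V ^ (2 * n + 2))) : A)‖) :=
    Summable.of_nonneg_of_le (fun n => norm_nonneg _) hterm2 hgeomq
  refine ⟨S1, S2, ?_⟩
  -- the finite measure on (0,1]
  haveI hfin : IsFiniteMeasure (volume.restrict (Set.Ioc (0:ℝ) 1)) := by
    constructor
    rw [Measure.restrict_apply_univ]
    simp [Real.volume_Ioc]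
  have huniv : ((volume.restrict (Set.Ioc (0:ℝ) 1)) Set.univ).toReal = 1 := by
    rw [Measure.restrict_apply_univ]
    simp [Real.volume_Ioc]
  -- integrability of the summands
  have hfint : ∀ k : ℕ, Integrable (ff F V k) (volume.restrict (Set.Ioc (0:ℝ) 1)) := by
    intro k
    show Integrable (fun t : ℝ => ((-1:ℝ) ^ k * t ^ k) • (F * V) ^ (k + 1)) _
    exact ((continuous_const.mul (continuous_pow k)).integrableOn_Ioc).integrable.smul_const _
  have hgint : ∀ k : ℕ, Integrable (gg F V k) (volume.restrict (Set.Ioc (0:ℝ) 1)) := by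
    intro k
    show Integrable (fun t : ℝ => (t ^ k * (1 - t) ^ k) • (F * V ^ (2 * k + 1))
      + (t ^ (k + 1) * (1 - t) ^ k) • V ^ (2 * k + 2)) _
    refine Integrable.add ?_ ?_
    · exact (((continuous_pow k).mul ((continuous_const.sub continuous_id').pow k)).integrableOn_Ioc).integrable.smul_const _
    · exact (((continuous_pow (k+1)).mul ((continuous_const.sub continuous_id').pow k)).integrableOn_Ioc).integrable.smul_const _
  -- values of the integrals
  have hIf : ∀ k : ℕ, ∫ t, ff F V k t ∂(volume.restrict (Set.Ioc (0:ℝ) 1))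
      = ((-1:ℝ) ^ k / (k + 1)) • (F * V) ^ (k + 1) := by
    intro k
    simp only [ff]
    rw [integral_smul_const]
    congr 1
    rw [← intervalIntegral.integral_of_le zero_le_one,
      intervalIntegral.integral_const_mul, integral_pow]
    rw [one_pow, zero_pow (Nat.succ_ne_zero k), sub_zero]
    ring
  have hIg : ∀ k : ℕ, ∫ t, gg F V k t ∂(volume.restrict (Set.Ioc (0:ℝ) 1))
      = ((k.factorial : ℝ) ^ 2 / ((2 * k + 1).factorial : ℝ)) •
          (F * V ^ (2 * k + 1) + (1 / 2 : ℝ) • V ^ (2 * k + 2)) := by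
    intro k
    simp only [gg]
    rw [integral_add
      ((((continuous_pow k).mul ((continuous_const.sub continuous_id').pow k)).integrableOn_Ioc).integrable.smul_const _)
      ((((continuous_pow (k+1)).mul ((continuous_const.sub continuous_id').pow k)).integrableOn_Ioc).integrable.smul_const _),
      integral_smul_const, integral_smul_const,
      ← intervalIntegral.integral_of_le zero_le_one,
      ← intervalIntegral.integral_of_le zero_le_one,
      beta_nat k k, beta_nat (k+1) k, smul_add, smul_smul]
    congr 1
    · congr 1
      have h : k + k + 1 = 2 * k + 1 := by ring
      rw [h]; ring
    · congr 1
      have h : k + 1 + k + 1 = (2 * k + 1) + 1 := by ring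
      rw [h, Nat.factorial_succ, Nat.factorial_succ]
      have hne : ((2 * k + 1).factorial : ℝ) ≠ 0 := by
        exact_mod_cast (2 * k + 1).factorial_ne_zero
      push_cast
      field_simp
      ring
  -- summability of the integrals of norms
  have hfnorm : Summable (fun k : ℕ =>
      ∫ t, ‖ff F V k t‖ ∂(volume.restrict (Set.Ioc (0:ℝ) 1))) := by
    refine Summable.of_nonneg_of_le
      (fun k => integral_nonneg fun t => norm_nonneg _) (fun k => ?_) hgeom1
    have hb : ∀ᵐ t ∂(volume.restrict (Set.Ioc (0:ℝ) 1)),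
        ‖‖ff F V k t‖‖ ≤ ‖F * V‖ ^ (k + 1) := by
      filter_upwards [ae_restrict_mem measurableSet_Ioc] with t ht
      obtain ⟨ht0, ht1⟩ := ht
      rw [norm_norm]
      simp only [ff]
      rw [norm_smul, Real.norm_eq_abs, abs_mul, abs_pow, abs_pow, abs_neg, abs_one,
        one_pow, one_mul, abs_of_pos ht0]
      calc t ^ k * ‖(F * V) ^ (k + 1)‖ ≤ 1 * ‖F * V‖ ^ (k + 1) :=
            mul_le_mul (pow_le_one₀ ht0.le ht1) (norm_pow_le' _ (Nat.succ_pos k))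
              (norm_nonneg _) zero_le_one
        _ = ‖F * V‖ ^ (k + 1) := one_mul _
    have hbb := norm_integral_le_of_norm_le_const hb
    rw [measureReal_def, huniv, mul_one] at hbb
    calc ∫ t, ‖ff F V k t‖ ∂(volume.restrict (Set.Ioc (0:ℝ) 1))
        ≤ |∫ t, ‖ff F V k t‖ ∂(volume.restrict (Set.Ioc (0:ℝ) 1))| := le_abs_self _
      _ ≤ ‖F * V‖ ^ (k + 1) := hbb
  have hgnorm : Summable (fun k : ℕ =>
      ∫ t, ‖gg F V k t‖ ∂(volume.restrict (Set.Ioc (0:ℝ) 1))) := by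
    refine Summable.of_nonneg_of_le
      (fun k => integral_nonneg fun t => norm_nonneg _) (fun k => ?_)
      ((summable_geometric_of_lt_one hqnn hq1).mul_left (‖F * V‖ + ‖V * V‖))
    have hb : ∀ᵐ t ∂(volume.restrict (Set.Ioc (0:ℝ) 1)),
        ‖‖gg F V k t‖‖ ≤ (‖F * V‖ + ‖V * V‖) * (‖V * V‖ / 4) ^ k := by
      filter_upwards [ae_restrict_mem measurableSet_Ioc] with t ht
      obtain ⟨ht0, ht1⟩ := ht
      have h1t : (0:ℝ) ≤ 1 - t := by linarith
      have h14 : t * (1 - t) ≤ 1/4 := by nlinarith [sq_nonneg (t - 1/2)]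
      have httn : (0:ℝ) ≤ t * (1 - t) := mul_nonneg ht0.le h1t
      have hp14 : (t * (1 - t)) ^ k ≤ (1/4) ^ k := pow_le_pow_left₀ httn h14 k
      have hn1 : ‖F * V ^ (2 * k + 1)‖ ≤ ‖F * V‖ * ‖V * V‖ ^ k := by
        rw [← FV_VV_pow]
        calc ‖(F * V) * (V * V) ^ k‖ ≤ ‖F * V‖ * ‖(V * V) ^ k‖ := norm_mul_le _ _
          _ ≤ ‖F * V‖ * ‖V * V‖ ^ k :=
              mul_le_mul_of_nonneg_left (norm_pow_le _ _) (norm_nonneg _)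
      have hn2 : ‖(V : A) ^ (2 * k + 2)‖ ≤ ‖V * V‖ ^ (k + 1) := by
        rw [← VV_pow_succ]
        exact norm_pow_le _ _
      rw [norm_norm]
      simp only [gg]
      calc ‖(t ^ k * (1 - t) ^ k) • (F * V ^ (2 * k + 1))
            + (t ^ (k + 1) * (1 - t) ^ k) • (V : A) ^ (2 * k + 2)‖
          ≤ ‖(t ^ k * (1 - t) ^ k) • (F * V ^ (2 * k + 1))‖
            + ‖(t ^ (k + 1) * (1 - t) ^ k) • (V : A) ^ (2 * k + 2)‖ := norm_add_le _ _
        _ = (t ^ k * (1 - t) ^ k) * ‖F * V ^ (2 * k + 1)‖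
            + (t ^ (k + 1) * (1 - t) ^ k) * ‖(V : A) ^ (2 * k + 2)‖ := by
            rw [norm_smul, norm_smul, Real.norm_eq_abs, Real.norm_eq_abs,
              abs_of_nonneg (by positivity), abs_of_nonneg (by positivity)]
        _ ≤ ((1:ℝ)/4) ^ k * (‖F * V‖ * ‖V * V‖ ^ k)
            + ((1:ℝ)/4) ^ k * ‖V * V‖ ^ (k + 1) := by
            refine add_le_add ?_ ?_
            · refine mul_le_mul ?_ hn1 (norm_nonneg _) (by positivity)
              rw [← mul_pow]; exact hp14
            · refine mul_le_mul ?_ hn2 (norm_nonneg _) (by positivity)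
              have : t ^ (k + 1) * (1 - t) ^ k = t * (t * (1 - t)) ^ k := by
                rw [mul_pow]; ring
              rw [this]
              calc t * (t * (1 - t)) ^ k ≤ 1 * (1/4) ^ k :=
                    mul_le_mul ht1 hp14 (by positivity) zero_le_one
                _ = (1/4) ^ k := one_mul _
        _ = (‖F * V‖ + ‖V * V‖) * (‖V * V‖ / 4) ^ k := by
            simp only [div_pow, one_pow]
            ring
    have hbb := norm_integral_le_of_norm_le_const hb
    rw [measureReal_def, huniv, mul_one] at hbb
    calc ∫ t, ‖gg F V k t‖ ∂(volume.restrict (Set.Ioc (0:ℝ) 1))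
        ≤ |∫ t, ‖gg F V k t‖ ∂(volume.restrict (Set.Ioc (0:ℝ) 1))| := le_abs_self _
      _ ≤ (‖F * V‖ + ‖V * V‖) * (‖V * V‖ / 4) ^ k := hbb
  -- assembling everything
  calc ∑' n : ℕ, ((-1 : ℝ) ^ n / (n + 1)) • (F * V) ^ (n + 1)
      = ∑' k : ℕ, ∫ t, ff F V k t ∂(volume.restrict (Set.Ioc (0:ℝ) 1)) :=
        tsum_congr fun k => (hIf k).symm
    _ = ∫ t, (∑' k : ℕ, ff F V k t) ∂(volume.restrict (Set.Ioc (0:ℝ) 1)) :=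
        integral_tsum_of_summable_integral_norm hfint hfnorm
    _ = ∫ t, (∑' k : ℕ, gg F V k t) ∂(volume.restrict (Set.Ioc (0:ℝ) 1)) := by
        refine integral_congr_ae ?_
        filter_upwards [ae_restrict_mem measurableSet_Ioc] with t ht
        exact stmt4_pointwise F V hF hflat hFV hVV ht
    _ = ∑' k : ℕ, ∫ t, gg F V k t ∂(volume.restrict (Set.Ioc (0:ℝ) 1)) :=
        (integral_tsum_of_summable_integral_norm hgint hgnorm).symm
    _ = ∑' n : ℕ, ((n.factorial : ℝ) ^ 2 / ((2 * n + 1).factorial : ℝ)) •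
          (F * V ^ (2 * n + 1) + (1 / 2 : ℝ) • V ^ (2 * n + 2)) := tsum_congr hIg
end

section
/- Fix n ∈ ℕ and natural numbers k₀, k₁, …, kₙ. The integral over the simplex Δ = {s ∈ ℝ^{n+1} : sᵢ ≥ 0 for all i, and s₀ + s₁ + ⋯ + sₙ ≤ 1} (with Lebesgue measure) of the function s ↦ ∏_{i=0}^{n} (s₀ + s₁ + ⋯ + sᵢ)^{kᵢ} equals ∏_{i=0}^{n} 1/(k₀ + k₁ + ⋯ + kᵢ + i + 1). Equivalently, ∫_Δ ∏_{i=0}^{n} (s₀+⋯+sᵢ)^{kᵢ}/kᵢ! ds = c(k₀,…,kₙ), where c(k₀,…,kₙ)⁻¹ = k₀!⋯kₙ!·(k₀+1)(k₀+k₁+2)⋯(k₀+⋯+kₙ+n+1). -/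
open MeasureTheory

namespace Stmt5Aux

/-- The standard simplex as a set. -/
def S (n : ℕ) : Set (Fin n → ℝ) := {s | (∀ i, 0 ≤ s i) ∧ ∑ i, s i ≤ 1}

lemma S_eq (n : ℕ) :
    S n = (⋂ i, {s : Fin n → ℝ | 0 ≤ s i}) ∩ {s | ∑ i, s i ≤ 1} := by
  ext s; simp [S, Set.mem_iInter]

lemma measurableSet_S (n : ℕ) : MeasurableSet (S n) := by
  rw [S_eq]
  exact (MeasurableSet.iInter fun i =>
      measurableSet_le measurable_const (measurable_pi_apply i)).inter
    (measurableSet_le (by fun_prop) measurable_const)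

lemma isClosed_S (n : ℕ) : IsClosed (S n) := by
  rw [S_eq]
  exact (isClosed_iInter fun i =>
      isClosed_le continuous_const (continuous_apply i)).inter
    (isClosed_le (by fun_prop) continuous_const)

lemma isCompact_S (n : ℕ) : IsCompact (S n) := by
  refine IsCompact.of_isClosed_subset (isCompact_Icc (a := (0 : Fin n → ℝ)) (b := 1))
    (isClosed_S n) ?_
  intro s hs
  refine ⟨fun i => hs.1 i, fun i => ?_⟩
  calc s i ≤ ∑ j, s j :=
        Finset.single_le_sum (fun j _ => hs.1 j) (Finset.mem_univ i)
    _ ≤ 1 := hs.2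

lemma cont_aux {n : ℕ} (m : Fin n → ℕ) :
    Continuous fun s : Fin n → ℝ => ∏ i, (∑ j ∈ Finset.Iic i, s j) ^ (m i) := by
  apply continuous_finset_prod
  intro i _
  exact (continuous_finset_sum _ fun j _ => continuous_apply j).pow _

lemma integrableOn_aux {n : ℕ} (m : Fin n → ℕ) :
    IntegrableOn (fun s : Fin n → ℝ => ∏ i, (∑ j ∈ Finset.Iic i, s j) ^ (m i)) (S n) := by
  exact (cont_aux m).continuousOn.integrableOn_compact (isCompact_S n)

lemma Iic_castSucc {n : ℕ} (i : Fin n) :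
    Finset.Iic i.castSucc = (Finset.Iic i).map Fin.castSuccOrderEmb.toEmbedding := by
  ext j
  simp only [Finset.mem_Iic, Finset.mem_map, RelEmbedding.coe_toEmbedding,
    Fin.castSuccOrderEmb_apply]
  constructor
  · intro hj
    have hjn : (j : ℕ) < n := by
      have := Fin.le_iff_val_le_val.mp hj
      simp only [Fin.coe_castSucc] at this
      omega
    refine ⟨⟨j, hjn⟩, ?_, ?_⟩
    · rw [Fin.le_iff_val_le_val] at hj ⊢
      simpa using hj
    · ext; simp
  · rintro ⟨a, ha, rfl⟩
    exact Fin.castSucc_le_castSucc_iff.mpr ha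

lemma sum_Iic_castSucc {M : Type*} [AddCommMonoid M] {n : ℕ} (f : Fin (n + 1) → M) (i : Fin n) :
    ∑ j ∈ Finset.Iic i.castSucc, f j = ∑ j ∈ Finset.Iic i, f j.castSucc := by
  rw [Iic_castSucc, Finset.sum_map]
  rfl

lemma Iic_last (n : ℕ) : Finset.Iic (Fin.last n) = Finset.univ := by
  ext j; simp [Fin.le_last]

lemma Iic_zero_fin1 : Finset.Iic (0 : Fin 1) = {0} := by decide

lemma key (n : ℕ) : ∀ k : Fin (n + 1) → ℕ,
    ∫ s in S (n + 1), (∏ i, (∑ j ∈ Finset.Iic i, s j) ^ (k i))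
      = ∏ i : Fin (n + 1), ((∑ j ∈ Finset.Iic i, (k j : ℝ)) + (i : ℕ) + 1)⁻¹ := by
  induction n with
  | zero =>
    intro k
    have hmp := (volume_preserving_funUnique (Fin 1) ℝ).symm
    rw [← integral_indicator (measurableSet_S 1)]
    erw [← hmp.integral_comp (MeasurableEquiv.measurableEmbedding _)
        (Set.indicator (S 1) (fun s => ∏ i, (∑ j ∈ Finset.Iic i, s j) ^ (k i)))]
    have hsymm : ∀ (x : ℝ) (j : Fin 1), (MeasurableEquiv.funUnique (Fin 1) ℝ).symm x j = x :=
      fun x j => rfl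
    have h1 : ∀ x : ℝ, Set.indicator (S 1)
        (fun s => ∏ i, (∑ j ∈ Finset.Iic i, s j) ^ (k i))
        ((MeasurableEquiv.funUnique (Fin 1) ℝ).symm x)
        = Set.indicator (Set.Icc (0:ℝ) 1) (fun x => x ^ k 0) x := by
      intro x
      have hmem : ((MeasurableEquiv.funUnique (Fin 1) ℝ).symm x ∈ S 1) ↔ x ∈ Set.Icc (0:ℝ) 1 := by
        simp [S, Fin.forall_fin_one, Fin.sum_univ_one, hsymm, Set.mem_Icc]
      have hval : (∏ i, (∑ j ∈ Finset.Iic i, ((MeasurableEquiv.funUnique (Fin 1) ℝ).symm x) j) ^ (k i)) = x ^ k 0 := by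
        simp [Fin.prod_univ_one, Iic_zero_fin1, hsymm]
      classical
      rw [Set.indicator_apply, Set.indicator_apply, if_congr hmem hval rfl]
    rw [funext h1, integral_indicator measurableSet_Icc,
      integral_Icc_eq_integral_Ioc, ← intervalIntegral.integral_of_le zero_le_one,
      integral_pow]
    simp [Fin.prod_univ_one, Iic_zero_fin1, zero_pow (Nat.succ_ne_zero (k 0))]
  | succ n IH =>
    intro k
    classical
    set F : (Fin (n + 2) → ℝ) → ℝ := fun s => ∏ i, (∑ j ∈ Finset.Iic i, s j) ^ (k i) with hF
    set kl : ℕ := k (Fin.last (n + 1)) with hkl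
    set g : (Fin (n + 1) → ℝ) → ℝ :=
      fun y => ∏ i, (∑ j ∈ Finset.Iic i, y j) ^ (k i.castSucc) with hg
    set σ : (Fin (n + 1) → ℝ) → ℝ := fun y => ∑ j, y j with hσ
    -- pointwise identities about snoc
    have hsum_snoc : ∀ (y : Fin (n + 1) → ℝ) (x : ℝ), ∑ i, Fin.snoc y x i = σ y + x := by
      intro y x
      rw [Fin.sum_univ_castSucc]
      simp [Fin.snoc_castSucc, Fin.snoc_last, hσ]
    have hFsnoc : ∀ (y : Fin (n + 1) → ℝ) (x : ℝ), F (Fin.snoc y x) = g y * (σ y + x) ^ kl := by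
      intro y x
      rw [hF]
      simp only
      rw [Fin.prod_univ_castSucc]
      congr 1
      · apply Finset.prod_congr rfl
        intro i _
        congr 1
        rw [sum_Iic_castSucc]
        exact Finset.sum_congr rfl fun j _ => by rw [Fin.snoc_castSucc]
      · rw [Iic_last, hsum_snoc]
    have hmem_snoc : ∀ (y : Fin (n + 1) → ℝ) (x : ℝ),
        (Fin.snoc y x ∈ S (n + 2)) ↔ ((∀ j, 0 ≤ y j) ∧ 0 ≤ x ∧ σ y + x ≤ 1) := by
      intro y x
      constructor
      · intro h
        refine ⟨fun j => ?_, ?_, ?_⟩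
        · have := h.1 j.castSucc; rwa [Fin.snoc_castSucc] at this
        · have := h.1 (Fin.last _); rwa [Fin.snoc_last] at this
        · rw [← hsum_snoc]; exact h.2
      · intro h
        refine ⟨fun i => ?_, ?_⟩
        · induction i using Fin.lastCases with
          | last => rw [Fin.snoc_last]; exact h.2.1
          | cast j => rw [Fin.snoc_castSucc]; exact h.1 j
        · rw [hsum_snoc]; exact h.2.2
    -- inner integral
    have hinner : ∀ y : Fin (n + 1) → ℝ,
        (∫ x, Set.indicator (S (n + 2)) F (Fin.snoc y x))
          = Set.indicator (S (n + 1))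
              (fun y => ((kl : ℝ) + 1)⁻¹ * (g y - g y * (σ y) ^ (kl + 1))) y := by
      intro y
      by_cases hy : y ∈ S (n + 1)
      · rw [Set.indicator_of_mem hy]
        have hy1 : ∀ i, 0 ≤ y i := hy.1
        have hy2 : σ y ≤ 1 := hy.2
        have hpt : ∀ x : ℝ, Set.indicator (S (n + 2)) F (Fin.snoc y x)
            = Set.indicator (Set.Icc 0 (1 - σ y)) (fun x => g y * (σ y + x) ^ kl) x := by
          intro x
          have hcond : (Fin.snoc y x ∈ S (n + 2)) ↔ x ∈ Set.Icc (0:ℝ) (1 - σ y) := by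
            rw [hmem_snoc, Set.mem_Icc]
            constructor
            · rintro ⟨-, hx0, hx1⟩; exact ⟨hx0, by linarith⟩
            · rintro ⟨hx0, hx1⟩; exact ⟨hy1, hx0, by linarith⟩
          rw [Set.indicator_apply, Set.indicator_apply, if_congr hcond (hFsnoc y x) rfl]
        calc (∫ x, Set.indicator (S (n + 2)) F (Fin.snoc y x))
            = ∫ x in Set.Icc (0:ℝ) (1 - σ y), g y * (σ y + x) ^ kl := by
              simp_rw [hpt]; exact integral_indicator measurableSet_Icc
          _ = ∫ x in (0:ℝ)..(1 - σ y), g y * (σ y + x) ^ kl := by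
              rw [integral_Icc_eq_integral_Ioc,
                ← intervalIntegral.integral_of_le (by linarith : (0:ℝ) ≤ 1 - σ y)]
          _ = g y * ∫ x in (0:ℝ)..(1 - σ y), (σ y + x) ^ kl := by
              rw [intervalIntegral.integral_const_mul]
          _ = ((kl : ℝ) + 1)⁻¹ * (g y - g y * (σ y) ^ (kl + 1)) := by
              rw [intervalIntegral.integral_comp_add_left (fun u => u ^ kl) (σ y)]
              have h1 : σ y + (1 - σ y) = 1 := by ring
              rw [add_zero, h1, integral_pow, one_pow]
              push_cast
              ring
      · rw [Set.indicator_of_notMem hy]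
        have h0 : ∀ x : ℝ, Set.indicator (S (n + 2)) F (Fin.snoc y x) = 0 := by
          intro x
          apply Set.indicator_of_notMem
          rw [hmem_snoc]
          rintro ⟨h1, h2, h3⟩
          exact hy ⟨h1, by simpa [hσ] using (by linarith : σ y ≤ 1)⟩
        simp_rw [h0, integral_zero]
    -- Fubini setup
    have hmp := ((volume_preserving_piFinSuccAbove (fun _ : Fin (n + 2) => ℝ)
        (Fin.last (n + 1))).symm)
    have hesymm : ∀ z : ℝ × (Fin (n + 1) → ℝ),
        (MeasurableEquiv.piFinSuccAbove (fun _ : Fin (n + 2) => ℝ) (Fin.last (n + 1))).symm z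
          = Fin.snoc z.2 z.1 := by
      intro z
      simp [MeasurableEquiv.piFinSuccAbove, Fin.insertNthEquiv, Fin.insertNth_last']
    have hIntF : Integrable (Set.indicator (S (n + 2)) F) := by
      rw [integrable_indicator_iff (measurableSet_S _)]
      exact integrableOn_aux k
    have hIntF2 : Integrable (fun z : ℝ × (Fin (n + 1) → ℝ) =>
        Set.indicator (S (n + 2)) F (Fin.snoc z.2 z.1)) (volume.prod volume) := by
      have h := (hmp.integrable_comp_emb (MeasurableEquiv.measurableEmbedding _)).mpr hIntF
      have h2 : (Set.indicator (S (n + 2)) F ∘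
          (MeasurableEquiv.piFinSuccAbove (fun _ : Fin (n + 2) => ℝ) (Fin.last (n + 1))).symm)
          = fun z => Set.indicator (S (n + 2)) F (Fin.snoc z.2 z.1) :=
        funext fun z => by simp only [Function.comp_apply, hesymm]
      rw [h2] at h; exact h
    -- integrability of the two outer pieces
    set k₂ : Fin (n + 1) → ℕ :=
      fun i => k i.castSucc + if i = Fin.last n then kl + 1 else 0 with hk₂
    have hgs_eq : ∀ y : Fin (n + 1) → ℝ,
        (∏ i, (∑ j ∈ Finset.Iic i, y j) ^ (k₂ i)) = g y * (σ y) ^ (kl + 1) := by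
      intro y
      calc (∏ i, (∑ j ∈ Finset.Iic i, y j) ^ (k₂ i))
          = (∏ i, (∑ j ∈ Finset.Iic i, y j) ^ (k i.castSucc))
            * ∏ i, (∑ j ∈ Finset.Iic i, y j) ^ (if i = Fin.last n then kl + 1 else 0) := by
            rw [← Finset.prod_mul_distrib]
            exact Finset.prod_congr rfl fun i _ => by rw [← pow_add]
        _ = g y * (σ y) ^ (kl + 1) := by
            simp only [hg]
            congr 1
            simp only [pow_ite, pow_zero]
            rw [Finset.prod_ite_eq' Finset.univ (Fin.last n)
              (fun i => (∑ j ∈ Finset.Iic i, y j) ^ (kl + 1))]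
            simp [Iic_last, hσ]
    have hg_int : IntegrableOn g (S (n + 1)) := integrableOn_aux (fun i => k i.castSucc)
    have hgs_int : IntegrableOn (fun y => g y * (σ y) ^ (kl + 1)) (S (n + 1)) := by
      have := integrableOn_aux k₂
      simpa [hgs_eq] using this
    -- main computation
    have hmain : ∫ s in S (n + 2), F s
        = ((kl : ℝ) + 1)⁻¹ * ((∫ y in S (n + 1), g y) - ∫ y in S (n + 1), g y * (σ y) ^ (kl + 1)) := by
      calc ∫ s in S (n + 2), F s
          = ∫ s, Set.indicator (S (n + 2)) F s := (integral_indicator (measurableSet_S _)).symm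
        _ = ∫ z : ℝ × (Fin (n + 1) → ℝ), Set.indicator (S (n + 2)) F (Fin.snoc z.2 z.1) := by
            rw [← hmp.integral_comp (MeasurableEquiv.measurableEmbedding _) (Set.indicator (S (n + 2)) F)]
            simp_rw [hesymm]
        _ = ∫ y, ∫ x, Set.indicator (S (n + 2)) F (Fin.snoc y x) :=
            integral_prod_symm _ hIntF2
        _ = ∫ y, Set.indicator (S (n + 1))
              (fun y => ((kl : ℝ) + 1)⁻¹ * (g y - g y * (σ y) ^ (kl + 1))) y := by
            simp_rw [hinner]
        _ = ∫ y in S (n + 1), ((kl : ℝ) + 1)⁻¹ * (g y - g y * (σ y) ^ (kl + 1)) :=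
            integral_indicator (measurableSet_S _)
        _ = ((kl : ℝ) + 1)⁻¹ * ∫ y in S (n + 1), (g y - g y * (σ y) ^ (kl + 1)) :=
            integral_const_mul _ _
        _ = ((kl : ℝ) + 1)⁻¹ *
              ((∫ y in S (n + 1), g y) - ∫ y in S (n + 1), g y * (σ y) ^ (kl + 1)) := by
            rw [integral_sub hg_int hgs_int]
    rw [hmain]
    -- apply IH to both integrals
    have hIH1 : (∫ y in S (n + 1), g y)
        = ∏ i : Fin (n + 1), ((∑ j ∈ Finset.Iic i, (k j.castSucc : ℝ)) + (i : ℕ) + 1)⁻¹ :=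
      IH (fun i => k i.castSucc)
    have hIH2 : (∫ y in S (n + 1), g y * (σ y) ^ (kl + 1))
        = ∏ i : Fin (n + 1), ((∑ j ∈ Finset.Iic i, (k₂ j : ℝ)) + (i : ℕ) + 1)⁻¹ := by
      rw [← IH k₂]
      exact setIntegral_congr_fun (measurableSet_S _) (fun y _ => (hgs_eq y).symm)
    rw [hIH1, hIH2]
    -- algebra
    set A : Fin (n + 1) → ℝ :=
      fun i => (∑ j ∈ Finset.Iic i, (k j.castSucc : ℝ)) + (i : ℕ) + 1 with hA
    have hApos : ∀ i, 0 < A i := by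
      intro i
      rw [hA]
      have : (0:ℝ) ≤ ∑ j ∈ Finset.Iic i, (k j.castSucc : ℝ) :=
        Finset.sum_nonneg fun j _ => Nat.cast_nonneg _
      positivity
    have hk₂sum : ∀ i : Fin (n + 1),
        ((∑ j ∈ Finset.Iic i, (k₂ j : ℝ)) + (i : ℕ) + 1)
          = A i + (if i = Fin.last n then (kl : ℝ) + 1 else 0) := by
      intro i
      rw [hA]
      simp only [hk₂]
      push_cast
      rw [Finset.sum_add_distrib, Finset.sum_ite_eq' (Finset.Iic i) (Fin.last n)
        (fun _ => (kl : ℝ) + 1)]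
      have : (Fin.last n ∈ Finset.Iic i) ↔ i = Fin.last n := by
        simp [Finset.mem_Iic, Fin.last_le_iff]
      rw [if_congr this rfl rfl]
      ring
    simp_rw [hk₂sum]
    -- rewrite RHS
    have hRHS : ∏ i : Fin (n + 2), ((∑ j ∈ Finset.Iic i, (k j : ℝ)) + (i : ℕ) + 1)⁻¹
        = (∏ i : Fin (n + 1), (A i)⁻¹) * (A (Fin.last n) + ((kl : ℝ) + 1))⁻¹ := by
      rw [Fin.prod_univ_castSucc]
      congr 1
      · apply Finset.prod_congr rfl
        intro i _
        rw [hA, sum_Iic_castSucc, Fin.coe_castSucc]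
      · congr 1
        simp only [hA]
        rw [Iic_last (n + 1), Iic_last n, Fin.sum_univ_castSucc (f := fun j => (k j : ℝ))]
        simp only [Fin.val_last, hkl]
        push_cast
        ring
    rw [hRHS]
    -- final field computation
    rw [Fin.prod_univ_castSucc (f := fun i => (A i)⁻¹),
      Fin.prod_univ_castSucc (f := fun i => (A i + if i = Fin.last n then (kl : ℝ) + 1 else 0)⁻¹)]
    have hne : ∀ i : Fin n, ¬ (i.castSucc = Fin.last n) := fun i => (Fin.castSucc_lt_last i).ne
    simp only [hne, if_false, if_true, add_zero, if_pos rfl]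
    set C : ℝ := ∏ i : Fin n, (A i.castSucc)⁻¹ with hC
    set a : ℝ := A (Fin.last n) with ha
    have hapos : 0 < a := hApos _
    have hbpos : 0 < a + ((kl : ℝ) + 1) := by positivity
    have hklpos : (0:ℝ) < (kl : ℝ) + 1 := by positivity
    field_simp
    ring

end Stmt5Aux

open Stmt5Aux in
/-- Simplex integral: for natural numbers `k₀,…,kₙ`,
`∫_{Δ} ∏ᵢ (s₀+⋯+sᵢ)^{kᵢ} ds = ∏ᵢ 1/(k₀+⋯+kᵢ+i+1)`, where
`Δ = {s ∈ ℝ^{n+1} : sᵢ ≥ 0, Σ sᵢ ≤ 1}`. -/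
theorem stmt_5 (n : ℕ) (k : Fin (n + 1) → ℕ) :
    ∫ s in {s : Fin (n + 1) → ℝ | (∀ i, 0 ≤ s i) ∧ ∑ i, s i ≤ 1},
        (∏ i, (∑ j ∈ Finset.Iic i, s j) ^ (k i))
      = ∏ i : Fin (n + 1), ((∑ j ∈ Finset.Iic i, (k j : ℝ)) + (i : ℕ) + 1)⁻¹ :=
  key n k
end

section
/- Let λ > 0 and α > 0 be real numbers and m ∈ ℕ. Then 2·∫₀^∞ ( ∫₀^∞ t^{α−1}·u^{m}·e^{−(u+tλ)²} du ) dt = λ^{−α} · Γ((α+m+1)/2) · ∑_{l=0}^{m} (−1)^l · binom(m,l) / (α+l), where Γ is the Gamma function and binom(m,l) is the binomial coefficient. -/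
open MeasureTheory
open Real Set Filter intervalIntegral

noncomputable def G (k : ℕ) (c : ℝ) : ℝ := ∫ s in Ioi c, s ^ k * Real.exp (-s ^ 2)

lemma gcont (k : ℕ) : Continuous fun s : ℝ => s ^ k * Real.exp (-s ^ 2) := by
  continuity

lemma gint (k : ℕ) {b : ℝ} (hb : 0 < b) {c : ℝ} (hc : 0 ≤ c) :
    IntegrableOn (fun s : ℝ => s ^ k * Real.exp (-b * s ^ 2)) (Ioi c) := by
  have h := integrableOn_rpow_mul_exp_neg_mul_sq hb (s := (k : ℝ))
    (lt_of_lt_of_le neg_one_lt_zero (Nat.cast_nonneg k))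
  have h2 : IntegrableOn (fun s : ℝ => s ^ k * Real.exp (-b * s ^ 2)) (Ioi 0) := by
    refine h.congr_fun (fun x hx => ?_) measurableSet_Ioi
    simp only [Real.rpow_natCast]
  exact h2.mono_set (Ioi_subset_Ioi hc)

lemma gint1 (k : ℕ) {c : ℝ} (hc : 0 ≤ c) :
    IntegrableOn (fun s : ℝ => s ^ k * Real.exp (-s ^ 2)) (Ioi c) := by
  have := gint k one_pos hc
  simpa using this

lemma G_eq (k : ℕ) (c : ℝ) :
    G k c = G k 0 - ∫ s in (0:ℝ)..c, s ^ k * Real.exp (-s ^ 2) := by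
  rcases le_or_gt 0 c with hc | hc
  · rw [intervalIntegral.integral_of_le hc, eq_sub_iff_add_eq, add_comm, G, G,
      ← Ioc_union_Ioi_eq_Ioi hc, setIntegral_union Ioc_disjoint_Ioi_same measurableSet_Ioi
        ((gint1 k le_rfl).mono_set Ioc_subset_Ioi_self) (gint1 k hc)]
  · rw [intervalIntegral.integral_symm, intervalIntegral.integral_of_le hc.le, sub_neg_eq_add,
      eq_comm, add_comm, G, G, ← Ioc_union_Ioi_eq_Ioi hc.le,
      setIntegral_union Ioc_disjoint_Ioi_same measurableSet_Ioi
        ((gcont k).integrableOn_Ioc) (gint1 k le_rfl)]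

lemma G_hasDerivAt (k : ℕ) (c : ℝ) :
    HasDerivAt (G k) (-(c ^ k * Real.exp (-c ^ 2))) c := by
  have h : G k = fun c => G k 0 - ∫ s in (0:ℝ)..c, s ^ k * Real.exp (-s ^ 2) :=
    funext (G_eq k)
  rw [h]
  exact (((gcont k).integral_hasStrictDerivAt 0 c).hasDerivAt).const_sub _

lemma G_cont (k : ℕ) : Continuous (G k) :=
  continuous_iff_continuousAt.mpr fun c => (G_hasDerivAt k c).continuousAt

lemma G_nonneg (k : ℕ) {c : ℝ} (hc : 0 ≤ c) : 0 ≤ G k c := by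
  refine setIntegral_nonneg measurableSet_Ioi fun s hs => ?_
  have : (0:ℝ) < s := lt_of_le_of_lt hc hs
  positivity

noncomputable def M (k : ℕ) : ℝ := ∫ s in Ioi (0:ℝ), s ^ k * Real.exp (-(1/2) * s ^ 2)

lemma G_le (k : ℕ) {c : ℝ} (hc : 0 ≤ c) :
    G k c ≤ Real.exp (-(1/2) * c ^ 2) * M k := by
  have h1 : G k c ≤ ∫ s in Ioi c, Real.exp (-(1/2) * c ^ 2) * (s ^ k * Real.exp (-(1/2) * s ^ 2)) := by
    refine setIntegral_mono_on (gint1 k hc) (((gint k (b := 1/2) one_half_pos hc)).const_mul _)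
      measurableSet_Ioi fun s hs => ?_
    have hs0 : (0:ℝ) ≤ s := hc.trans (le_of_lt hs)
    rw [mul_comm (Real.exp (-(1/2) * c ^ 2)), mul_assoc]
    refine mul_le_mul_of_nonneg_left ?_ (by positivity)
    rw [← Real.exp_add]
    refine Real.exp_le_exp.mpr ?_
    nlinarith [le_of_lt (mem_Ioi.mp hs)]
  rw [MeasureTheory.integral_const_mul] at h1
  refine h1.trans ?_
  rw [mul_comm (Real.exp _), mul_comm (Real.exp _)]
  refine mul_le_mul_of_nonneg_right ?_ (by positivity)
  refine setIntegral_mono_set (gint k one_half_pos le_rfl) ?_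
    (HasSubset.Subset.eventuallyLE (Ioi_subset_Ioi hc))
  filter_upwards [ae_restrict_mem measurableSet_Ioi] with s hs
  have : (0:ℝ) < s := hs
  positivity

lemma tendsto_rpow_exp_sq {β b : ℝ} (hb : 0 < b) :
    Tendsto (fun t : ℝ => t ^ β * Real.exp (-b * t ^ 2)) atTop (nhds 0) := by
  have h := tendsto_rpow_mul_exp_neg_mul_atTop_nhds_zero (β / 2) b hb
  have h2 : Tendsto (fun t : ℝ => t ^ 2) atTop atTop :=
    tendsto_pow_atTop two_ne_zero
  refine (h.comp h2).congr' ?_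
  filter_upwards [eventually_gt_atTop (0:ℝ)] with t ht
  simp only [Function.comp]
  rw [← Real.rpow_natCast t 2, ← Real.rpow_mul ht.le]
  congr 1; ring

lemma M_nonneg (k : ℕ) : 0 ≤ M k := by
  refine setIntegral_nonneg measurableSet_Ioi fun s hs => ?_
  have : (0:ℝ) < s := hs
  positivity

lemma keyInt {lam β : ℝ} (hlam : 0 < lam) (hβ : 0 < β) (k : ℕ) :
    IntegrableOn (fun t : ℝ => t ^ (β - 1) * G k (t * lam)) (Ioi 0) := by
  refine Integrable.mono'
    (g := fun t => M k * (t ^ (β - 1) * Real.exp (-(lam ^ 2 / 2) * t ^ 2)))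
    ((integrableOn_rpow_mul_exp_neg_mul_sq (by positivity) (by linarith)).const_mul _)
    ?_ ?_
  · exact ((measurable_id'.pow measurable_const).mul
      ((G_cont k).measurable.comp (measurable_id.mul_const lam))).aestronglyMeasurable
  · filter_upwards [ae_restrict_mem measurableSet_Ioi] with t ht
    have ht0 : (0:ℝ) < t := ht
    have hc0 : (0:ℝ) ≤ t * lam := by positivity
    rw [Real.norm_eq_abs, abs_mul, abs_of_nonneg (Real.rpow_nonneg ht0.le _),
      abs_of_nonneg (G_nonneg k hc0)]
    have hb := G_le k hc0
    have he : Real.exp (-(1/2) * (t * lam) ^ 2) = Real.exp (-(lam ^ 2 / 2) * t ^ 2) := by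
      congr 1; ring
    rw [he] at hb
    calc t ^ (β - 1) * G k (t * lam)
        ≤ t ^ (β - 1) * (Real.exp (-(lam ^ 2 / 2) * t ^ 2) * M k) :=
          mul_le_mul_of_nonneg_left hb (Real.rpow_nonneg ht0.le _)
      _ = M k * (t ^ (β - 1) * Real.exp (-(lam ^ 2 / 2) * t ^ 2)) := by ring

lemma key {lam β : ℝ} (hlam : 0 < lam) (hβ : 0 < β) (k : ℕ) :
    ∫ t in Ioi (0:ℝ), t ^ (β - 1) * G k (t * lam)
      = lam ^ (-β) * Real.Gamma ((β + k + 1) / 2) / (2 * β) := by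
  set f : ℝ → ℝ := fun t => t ^ β / β * G k (t * lam) with hf
  set f' : ℝ → ℝ := fun t =>
    t ^ (β - 1) * G k (t * lam)
      - lam ^ (k + 1) / β * (t ^ (β + k) * Real.exp (-lam ^ 2 * t ^ 2)) with hf'
  have hgaussInt : IntegrableOn (fun t : ℝ => t ^ (β + (k:ℝ)) * Real.exp (-lam ^ 2 * t ^ 2))
      (Ioi 0) := by
    refine integrableOn_rpow_mul_exp_neg_mul_sq (by positivity) ?_
    have : (0:ℝ) ≤ (k:ℝ) := Nat.cast_nonneg k
    linarith
  have hf'int : IntegrableOn f' (Ioi 0) :=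
    (keyInt hlam hβ k).sub (hgaussInt.const_mul _)
  have hderiv : ∀ t ∈ Ioi (0:ℝ), HasDerivAt f (f' t) t := by
    intro t ht
    have ht0 : (0:ℝ) < t := ht
    have H := ((Real.hasDerivAt_rpow_const (x := t) (p := β) (Or.inl ht0.ne')).div_const β).mul
      ((G_hasDerivAt k (t * lam)).comp t ((hasDerivAt_id t).mul_const lam))
    convert H using 1
    · rfl
    · rfl
    · rfl
    have hpow : t ^ β * t ^ k = t ^ (β + (k:ℝ)) := by
      rw [← Real.rpow_natCast t k, ← Real.rpow_add ht0]
    have he : Real.exp (-(t * lam) ^ 2) = Real.exp (-lam ^ 2 * t ^ 2) := by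
      congr 1; ring
    have hβ' : β ≠ 0 := hβ.ne'
    simp only [hf', id_eq, Function.comp_apply]
    rw [mul_pow, he, ← hpow]
    field_simp
    ring
  have hcont : ContinuousWithinAt f (Ici 0) 0 := by
    refine ContinuousAt.continuousWithinAt ?_
    refine ContinuousAt.mul (ContinuousAt.div_const ?_ _) ?_
    · exact Real.continuousAt_rpow_const 0 β (Or.inr hβ.le)
    · exact (G_cont k).continuousAt.comp ((continuous_id.mul continuous_const).continuousAt)
  have htop : Tendsto f atTop (nhds 0) := by
    refine squeeze_zero_norm' ?_
      (((tendsto_rpow_exp_sq (β := β) (b := lam ^ 2 / 2) (by positivity)).const_mul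
        (M k / β)).congr (fun t => rfl) |>.mono_right ?_)
    · filter_upwards [eventually_gt_atTop (0:ℝ)] with t ht
      have hc0 : (0:ℝ) ≤ t * lam := by positivity
      have hb := G_le k hc0
      have he : Real.exp (-(1/2) * (t * lam) ^ 2) = Real.exp (-(lam ^ 2 / 2) * t ^ 2) := by
        congr 1; ring
      rw [he] at hb
      rw [Real.norm_eq_abs, hf]
      have habs : |t ^ β / β * G k (t * lam)| = t ^ β / β * G k (t * lam) := by
        refine abs_of_nonneg ?_
        have := G_nonneg k hc0
        have := Real.rpow_nonneg ht.le β
        positivity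
      rw [habs]
      calc t ^ β / β * G k (t * lam)
          ≤ t ^ β / β * (Real.exp (-(lam ^ 2 / 2) * t ^ 2) * M k) := by
            refine mul_le_mul_of_nonneg_left hb ?_
            have := Real.rpow_nonneg ht.le β
            positivity
        _ = M k / β * (t ^ β * Real.exp (-(lam ^ 2 / 2) * t ^ 2)) := by ring
    · simp [mul_zero]
  have hFTC : ∫ t in Ioi (0:ℝ), f' t = 0 - f 0 :=
    integral_Ioi_of_hasDerivAt_of_tendsto hcont hderiv hf'int htop
  have hf0 : f 0 = 0 := by
    simp [hf, Real.zero_rpow hβ.ne']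
  have split : ∀ t : ℝ, t ^ (β - 1) * G k (t * lam)
      = f' t + lam ^ (k + 1) / β * (t ^ (β + (k:ℝ)) * Real.exp (-lam ^ 2 * t ^ 2)) := by
    intro t; simp only [hf']; ring
  rw [setIntegral_congr_fun measurableSet_Ioi (fun t _ => split t),
    integral_add hf'int (hgaussInt.const_mul _), hFTC, hf0, MeasureTheory.integral_const_mul]
  have hgauss : ∫ t in Ioi (0:ℝ), t ^ (β + (k:ℝ)) * Real.exp (-lam ^ 2 * t ^ 2)
      = (lam ^ 2) ^ (-(β + (k:ℝ) + 1) / 2) * (1 / 2) * Real.Gamma ((β + (k:ℝ) + 1) / 2) := by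
    rw [← integral_rpow_mul_exp_neg_mul_rpow two_pos
      (by have : (0:ℝ) ≤ (k:ℝ) := Nat.cast_nonneg k; linarith) (by positivity : (0:ℝ) < lam ^ 2)]
    refine setIntegral_congr_fun measurableSet_Ioi fun t ht => ?_
    rw [Real.rpow_two]
  rw [hgauss]
  have h1 : ((lam ^ 2 : ℝ)) ^ (-(β + (k:ℝ) + 1) / 2) = lam ^ (-(β + (k:ℝ) + 1)) := by
    rw [← Real.rpow_natCast lam 2, ← Real.rpow_mul hlam.le]
    congr 1; push_cast; ring
  have h2 : (lam : ℝ) ^ (k + 1) * lam ^ (-(β + (k:ℝ) + 1)) = lam ^ (-β) := by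
    rw [← Real.rpow_natCast lam (k + 1), ← Real.rpow_add hlam]
    congr 1; push_cast; ring
  rw [h1, ← h2]
  ring

lemma shift_Ioi (f : ℝ → ℝ) (a c : ℝ) :
    ∫ x in Ioi a, f (x + c) = ∫ x in Ioi (a + c), f x := by
  have h := (measurePreserving_add_right (volume : Measure ℝ) c).setIntegral_preimage_emb
    (measurableEmbedding_addRight c) f (Ioi (a + c))
  simpa using h

lemma inner_eval {c : ℝ} (hc : 0 < c) (m : ℕ) :
    ∫ u in Ioi (0:ℝ), u ^ m * Real.exp (-(u + c) ^ 2)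
      = ∑ i ∈ Finset.range (m + 1),
          ((-1:ℝ) ^ (i + m) * c ^ (m - i) * (m.choose i : ℝ)) * G i c := by
  have hshift : ∫ u in Ioi (0:ℝ), u ^ m * Real.exp (-(u + c) ^ 2)
      = ∫ s in Ioi c, (s - c) ^ m * Real.exp (-s ^ 2) := by
    have h := shift_Ioi (fun s => (s - c) ^ m * Real.exp (-s ^ 2)) 0 c
    simp only [add_sub_cancel_right, zero_add] at h
    exact h
  rw [hshift]
  have hexp : ∀ s ∈ Ioi c, (s - c) ^ m * Real.exp (-s ^ 2)
      = ∑ i ∈ Finset.range (m + 1),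
          ((-1:ℝ) ^ (i + m) * c ^ (m - i) * (m.choose i : ℝ)) * (s ^ i * Real.exp (-s ^ 2)) := by
    intro s _
    rw [sub_pow, Finset.sum_mul]
    exact Finset.sum_congr rfl fun i _ => by ring
  rw [setIntegral_congr_fun measurableSet_Ioi hexp,
    integral_finset_sum _ fun i _ => (gint1 i hc.le).const_mul _]
  exact Finset.sum_congr rfl fun i _ => MeasureTheory.integral_const_mul _ _

/-- For `λ, α > 0` and `m ∈ ℕ`:
`2·∫₀^∞ ∫₀^∞ t^{α−1} u^m e^{−(u+tλ)²} du dt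
  = λ^{−α} Γ((α+m+1)/2) Σ_{l=0}^m (−1)^l C(m,l)/(α+l)`. -/
theorem stmt_6 (lam α : ℝ) (hlam : 0 < lam) (hα : 0 < α) (m : ℕ) :
    2 * ∫ t in Set.Ioi (0 : ℝ),
        (∫ u in Set.Ioi (0 : ℝ), t ^ (α - 1) * u ^ m * Real.exp (-(u + t * lam) ^ 2))
      = lam ^ (-α) * Real.Gamma ((α + m + 1) / 2) *
          ∑ l ∈ Finset.range (m + 1), (-1 : ℝ) ^ l * (m.choose l : ℝ) / (α + l) := by
  have hsum : ∀ t ∈ Set.Ioi (0:ℝ),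
      (∫ u in Set.Ioi (0:ℝ), t ^ (α - 1) * u ^ m * Real.exp (-(u + t * lam) ^ 2))
        = ∑ i ∈ Finset.range (m + 1),
            ((-1:ℝ) ^ (i + m) * lam ^ (m - i) * (m.choose i : ℝ)) *
              (t ^ (α + ((m - i : ℕ) : ℝ) - 1) * G i (t * lam)) := by
    intro t ht
    have ht0 : (0:ℝ) < t := ht
    have hc : 0 < t * lam := by positivity
    have h1 : (∫ u in Set.Ioi (0:ℝ), t ^ (α - 1) * u ^ m * Real.exp (-(u + t * lam) ^ 2))
        = t ^ (α - 1) * ∫ u in Set.Ioi (0:ℝ), u ^ m * Real.exp (-(u + t * lam) ^ 2) := by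
      rw [← MeasureTheory.integral_const_mul]
      exact setIntegral_congr_fun measurableSet_Ioi fun u _ => by ring
    rw [h1, inner_eval hc m, Finset.mul_sum]
    refine Finset.sum_congr rfl fun i hi => ?_
    have hp : t ^ (α - 1) * (t:ℝ) ^ (m - i) = t ^ (α + ((m - i : ℕ) : ℝ) - 1) := by
      rw [← Real.rpow_natCast t (m - i), ← Real.rpow_add ht0]
      congr 1; ring
    rw [mul_pow, ← hp]
    ring
  rw [setIntegral_congr_fun measurableSet_Ioi hsum,
    integral_finset_sum _ fun i _ =>
      (keyInt hlam (add_pos_of_pos_of_nonneg hα (Nat.cast_nonneg (m - i))) i).const_mul _]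
  have hterm : ∀ i ∈ Finset.range (m + 1),
      (∫ t in Set.Ioi (0:ℝ), ((-1:ℝ) ^ (i + m) * lam ^ (m - i) * (m.choose i : ℝ)) *
          (t ^ (α + ((m - i : ℕ) : ℝ) - 1) * G i (t * lam)))
        = ((-1:ℝ) ^ (i + m) * lam ^ (m - i) * (m.choose i : ℝ)) *
            (lam ^ (-(α + ((m - i : ℕ) : ℝ))) *
              Real.Gamma ((α + ((m - i : ℕ) : ℝ) + i + 1) / 2) /
                (2 * (α + ((m - i : ℕ) : ℝ)))) := by
    intro i _
    rw [MeasureTheory.integral_const_mul,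
      key hlam (add_pos_of_pos_of_nonneg hα (Nat.cast_nonneg (m - i))) i]
  rw [Finset.sum_congr rfl hterm]
  have hreflect : (∑ l ∈ Finset.range (m + 1), (-1:ℝ) ^ l * (m.choose l : ℝ) / (α + l))
      = ∑ i ∈ Finset.range (m + 1),
          (-1:ℝ) ^ (m - i) * (m.choose (m - i) : ℝ) / (α + ((m - i : ℕ) : ℝ)) := by
    have h := Finset.sum_range_reflect
      (fun l => (-1:ℝ) ^ l * (m.choose l : ℝ) / (α + l)) (m + 1)
    simp only [Nat.add_sub_cancel] at h
    exact h.symm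
  rw [hreflect, Finset.mul_sum, Finset.mul_sum]
  refine Finset.sum_congr rfl fun i hi => ?_
  have him : i ≤ m := Nat.lt_succ_iff.mp (Finset.mem_range.mp hi)
  have hd0 : (0:ℝ) < α + ((m - i : ℕ) : ℝ) :=
    add_pos_of_pos_of_nonneg hα (Nat.cast_nonneg (m - i))
  have hΓarg : (α + ((m - i : ℕ) : ℝ) + i + 1) / 2 = (α + (m:ℝ) + 1) / 2 := by
    have hcast : ((m - i : ℕ) : ℝ) = (m:ℝ) - i := by
      exact Nat.cast_sub him
    rw [hcast]; ring
  have hsign : (-1:ℝ) ^ (i + m) = (-1:ℝ) ^ (m - i) := by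
    have h : i + m = (m - i) + 2 * i := by omega
    rw [h, pow_add, pow_mul, neg_one_sq, one_pow, mul_one]
  have hch : ((m.choose (m - i)) : ℝ) = (m.choose i : ℝ) := by
    rw [Nat.choose_symm him]
  have hlampow : (lam : ℝ) ^ (m - i) * lam ^ (-(α + ((m - i : ℕ) : ℝ))) = lam ^ (-α) := by
    rw [← Real.rpow_natCast lam (m - i), ← Real.rpow_add hlam]
    congr 1; ring
  rw [hΓarg, hsign, hch, ← hlampow,
    show (2 * (α + ((m - i : ℕ) : ℝ))) = (α + ((m - i : ℕ) : ℝ)) * 2 from mul_comm _ _,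
    ← div_div]
  ring
end

section
/- Let f : ℝ → ℂ be continuous on (0,∞). Let N ≥ 1, let c₀ < c₁ < ⋯ < c_N be real numbers, a₀, …, a_{N−1} ∈ ℂ, and C, δ > 0 be such that ‖f(t)‖ ≤ C·e^{−δt} for all t ≥ 1 and ‖f(t) − ∑_{i=0}^{N−1} aᵢ·t^{cᵢ}‖ ≤ C·t^{c_N} for all 0 < t ≤ 1. Then there exists a function F : ℂ → ℂ such that: (i) for every z with Re z > −c₀, the integral ∫₀^∞ t^{z−1} f(t) dt converges absolutely and equals F(z); and (ii) the function z ↦ F(z) − ∑_{i=0}^{N−1} aᵢ/(z + cᵢ) is differentiable (holomorphic) on the half-plane {z : Re z > −c_N}. In particular F is meromorphic on that half-plane with at most simple poles at z = −cᵢ, with residue aᵢ at −cᵢ. -/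
open MeasureTheory
open Set Filter Asymptotics Complex
open scoped Topology


lemma myLocInd {q : ℝ → ℂ} (hq : LocallyIntegrableOn q (Set.Ioi 0))
    {s : Set ℝ} (hs : MeasurableSet s) :
    LocallyIntegrableOn (s.indicator q) (Set.Ioi 0) := by
  rw [locallyIntegrableOn_iff isOpen_Ioi.isLocallyClosed] at hq ⊢
  exact fun k hk hkc => (hq k hk hkc).indicator hs

lemma myHasMellinSum {ι : Type*} (s : Finset ι) (f : ι → ℝ → ℂ) (v : ι → ℂ) (z : ℂ)
    (h : ∀ i ∈ s, HasMellin (f i) z (v i)) :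
    HasMellin (fun t => ∑ i ∈ s, f i t) z (∑ i ∈ s, v i) := by
  classical
  induction s using Finset.induction_on with
  | empty =>
      simp only [Finset.sum_empty]
      exact ⟨by simp [MellinConvergent], by simp [mellin]⟩
  | insert i s' hx ih =>
      have h1 := h i (Finset.mem_insert_self i s')
      have h2 := ih (fun j hj => h j (Finset.mem_insert_of_mem hj))
      have := hasMellin_add h1.1 h2.1
      rw [h1.2, h2.2] at this
      simpa [Finset.sum_insert hx] using this

/-- Meromorphic continuation of the Mellin transform of a function with short-time
asymptotic expansion `f(t) ≈ Σᵢ aᵢ t^{cᵢ}` and exponential decay at infinity: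
the Mellin transform `F(z) = ∫₀^∞ t^{z−1} f(t) dt` converges for `Re z > −c₀` and
`F(z) − Σᵢ aᵢ/(z+cᵢ)` extends holomorphically to `Re z > −c_N`. -/
theorem stmt_12 (f : ℝ → ℂ) (hf : ContinuousOn f (Set.Ioi 0)) (N : ℕ) (hN : 1 ≤ N)
    (c : Fin (N + 1) → ℝ) (hc : StrictMono c) (a : Fin N → ℂ)
    (C δ : ℝ) (hC : 0 < C) (hδ : 0 < δ)
    (hdecay : ∀ t : ℝ, 1 ≤ t → ‖f t‖ ≤ C * Real.exp (-δ * t))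
    (hasym : ∀ t : ℝ, 0 < t → t ≤ 1 →
      ‖f t - ∑ i : Fin N, a i * (t : ℂ) ^ (c i.castSucc : ℂ)‖ ≤ C * t ^ (c (Fin.last N))) :
    ∃ F : ℂ → ℂ,
      (∀ z : ℂ, -c 0 < z.re →
        IntegrableOn (fun t : ℝ => (t : ℂ) ^ (z - 1) * f t) (Set.Ioi 0) ∧
        ∫ t in Set.Ioi (0 : ℝ), (t : ℂ) ^ (z - 1) * f t = F z) ∧
      DifferentiableOn ℂ
        (fun z : ℂ => F z - ∑ i : Fin N, a i / (z + (c i.castSucc : ℂ)))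
        {z : ℂ | -c (Fin.last N) < z.re} := by
  classical
  set cN : ℝ := c (Fin.last N) with hcN
  have h0N : c 0 < cN := hc (by rw [Fin.lt_def]; simpa using (show 0 < N by omega))
  have hci : ∀ i : Fin N, c 0 ≤ c i.castSucc := fun i => hc.monotone (Fin.zero_le _)
  have hciN : ∀ i : Fin N, c i.castSucc < cN := fun i => hc (Fin.castSucc_lt_last i)
  -- pieces
  set p : ℝ → ℂ := fun t => ∑ i : Fin N, a i * (t : ℂ) ^ (c i.castSucc : ℂ) with hp
  set g : ℝ → ℂ := Set.indicator (Set.Ioc 0 1) (fun t => f t - p t) with hg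
  set fh : ℝ → ℂ := Set.indicator (Set.Ioi 1) f with hfh
  set P : Fin N → ℝ → ℂ :=
    fun i t => a i • Set.indicator (Set.Ioc 0 1) (fun u : ℝ => (u : ℂ) ^ (c i.castSucc : ℂ)) t
    with hP
  -- norms of cpow
  have hnc : ∀ (t : ℝ), 0 < t → ∀ r : ℝ, ‖(t : ℂ) ^ (r : ℂ)‖ = t ^ r := by
    intro t ht r
    rw [Complex.norm_cpow_eq_rpow_re_of_pos ht, Complex.ofReal_re]
  -- continuity / local integrability
  have hploc : ContinuousOn p (Set.Ioi 0) := by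
    apply continuousOn_finset_sum
    intro i _
    exact continuousOn_const.mul
      ((Complex.continuous_ofReal.continuousOn).cpow continuousOn_const
        (fun t ht => Complex.ofReal_mem_slitPlane.2 ht))
  have hfloc : LocallyIntegrableOn f (Set.Ioi 0) :=
    hf.locallyIntegrableOn measurableSet_Ioi
  have hgloc : LocallyIntegrableOn g (Set.Ioi 0) :=
    myLocInd (hfloc.sub (hploc.locallyIntegrableOn measurableSet_Ioi)) measurableSet_Ioc
  have hfhloc : LocallyIntegrableOn fh (Set.Ioi 0) :=
    myLocInd hfloc measurableSet_Ioi
  -- decomposition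
  have hdecomp : ∀ t ∈ Set.Ioi (0:ℝ), f t = g t + (∑ i : Fin N, P i t) + fh t := by
    intro t ht
    by_cases h1 : t ≤ 1
    · have hmem : t ∈ Set.Ioc (0:ℝ) 1 := ⟨ht, h1⟩
      have hnm : t ∉ Set.Ioi (1:ℝ) := by simpa using h1
      simp only [hg, hfh, hP, Set.indicator_of_mem hmem, Set.indicator_of_notMem hnm,
        smul_eq_mul, hp, add_zero]
      ring
    · push_neg at h1
      have hnm : t ∉ Set.Ioc (0:ℝ) 1 := fun h => absurd h.2 (not_le.2 h1)
      simp [hg, hfh, hP, Set.indicator_of_notMem hnm, Set.indicator_of_mem (Set.mem_Ioi.2 h1)]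
  -- asymptotics of g at 0
  have hg_bot : g =O[𝓝[>] (0:ℝ)] fun t : ℝ => t ^ (-(-cN)) := by
    rw [isBigO_iff]
    refine ⟨C, ?_⟩
    filter_upwards [Ioc_mem_nhdsGT_of_mem (by simp : (0:ℝ) ∈ Set.Ico 0 1)] with t ht
    have ht0 : (0:ℝ) < t := ht.1
    rw [hg, Set.indicator_of_mem ht]
    calc ‖f t - p t‖ ≤ C * t ^ cN := hasym t ht.1 ht.2
      _ = C * ‖t ^ (-(-cN))‖ := by
          rw [neg_neg, Real.norm_of_nonneg (Real.rpow_nonneg ht0.le _)]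
  -- g vanishes at top
  have hg_top : ∀ a' : ℝ, g =O[atTop] fun t : ℝ => t ^ (-a') := by
    intro a'
    have : g =ᶠ[atTop] (fun _ => (0:ℂ)) := by
      filter_upwards [eventually_gt_atTop (1:ℝ)] with t ht
      exact Set.indicator_of_notMem (fun h => absurd h.2 (not_le.2 ht)) _
    exact this.trans_isBigO (isBigO_zero _ _)
  -- fh vanishes at 0
  have hfh_bot : fh =O[𝓝[>] (0:ℝ)] fun t : ℝ => t ^ (-(-cN)) := by
    have : fh =ᶠ[𝓝[>] (0:ℝ)] (fun _ => (0:ℂ)) := by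
      filter_upwards [Ioc_mem_nhdsGT_of_mem (by simp : (0:ℝ) ∈ Set.Ico 0 1)] with t ht
      exact Set.indicator_of_notMem (by simpa using ht.2) _
    exact this.trans_isBigO (isBigO_zero _ _)
  -- fh exponential decay at top
  have hfh_top : fh =O[atTop] fun t : ℝ => Real.exp (-δ * t) := by
    rw [isBigO_iff]
    refine ⟨C, ?_⟩
    filter_upwards [eventually_ge_atTop (1:ℝ)] with t ht
    rw [Real.norm_of_nonneg (Real.exp_pos _).le]
    by_cases h1 : t ∈ Set.Ioi (1:ℝ)
    · rw [hfh, Set.indicator_of_mem h1]; exact hdecay t ht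
    · rw [hfh, Set.indicator_of_notMem h1]
      simp only [norm_zero]
      positivity
  -- f bounds
  have hf_bot : f =O[𝓝[>] (0:ℝ)] fun t : ℝ => t ^ (-(-c 0)) := by
    rw [isBigO_iff]
    refine ⟨C + ∑ i : Fin N, ‖a i‖, ?_⟩
    filter_upwards [Ioc_mem_nhdsGT_of_mem (by simp : (0:ℝ) ∈ Set.Ico 0 1)] with t ht
    have ht0 : (0:ℝ) < t := ht.1
    have hb : ‖f t‖ ≤ C * t ^ cN + ∑ i : Fin N, ‖a i‖ * t ^ (c i.castSucc) := by
      calc ‖f t‖ ≤ ‖f t - p t‖ + ‖p t‖ := by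
            simpa using norm_add_le (f t - p t) (p t)
        _ ≤ C * t ^ cN + ∑ i : Fin N, ‖a i‖ * t ^ (c i.castSucc) := by
            refine add_le_add (hasym t ht.1 ht.2) ?_
            refine (norm_sum_le _ _).trans (Finset.sum_le_sum fun i _ => ?_)
            rw [norm_mul, hnc t ht0]
    have hle : C * t ^ cN + ∑ i : Fin N, ‖a i‖ * t ^ (c i.castSucc)
        ≤ (C + ∑ i : Fin N, ‖a i‖) * t ^ (c 0) := by
      rw [add_mul, Finset.sum_mul]
      refine add_le_add ?_ (Finset.sum_le_sum fun i _ => ?_)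
      · exact mul_le_mul_of_nonneg_left
          (Real.rpow_le_rpow_of_exponent_ge ht0 ht.2 h0N.le) hC.le
      · exact mul_le_mul_of_nonneg_left
          (Real.rpow_le_rpow_of_exponent_ge ht0 ht.2 (hci i)) (norm_nonneg _)
    rw [neg_neg, Real.norm_of_nonneg (Real.rpow_nonneg ht0.le _)]
    exact (hb.trans hle)
  have hf_top : f =O[atTop] fun t : ℝ => Real.exp (-δ * t) := by
    rw [isBigO_iff]
    refine ⟨C, ?_⟩
    filter_upwards [eventually_ge_atTop (1:ℝ)] with t ht
    rw [Real.norm_of_nonneg (Real.exp_pos _).le]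
    exact hdecay t ht
  -- the function F
  refine ⟨fun z => mellin g z + (∑ i : Fin N, a i / (z + (c i.castSucc : ℂ))) + mellin fh z,
    ?_, ?_⟩
  · intro z hz
    have hzN : -cN < z.re := by linarith
    -- convergence of f
    have hconv_f : MellinConvergent f z :=
      mellinConvergent_of_isBigO_rpow_exp hδ hfloc hf_top hf_bot (by linarith)
    have hconv_g : MellinConvergent g z :=
      mellinConvergent_of_isBigO_rpow hgloc (hg_top (z.re + 1)) (lt_add_one _) hg_bot
        (by linarith)
    have hconv_fh : MellinConvergent fh z :=
      mellinConvergent_of_isBigO_rpow_exp hδ hfhloc hfh_top hfh_bot (by linarith)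
    have hmelP : HasMellin (fun t => ∑ i : Fin N, P i t) z
        (∑ i : Fin N, a i / (z + (c i.castSucc : ℂ))) := by
      refine myHasMellinSum Finset.univ P _ z fun i _ => ?_
      have hzc : 0 < z.re + ((c i.castSucc : ℝ) : ℂ).re := by
        rw [Complex.ofReal_re]
        have := hci i; linarith
      have h0 := hasMellin_cpow_Ioc ((c i.castSucc : ℝ) : ℂ) hzc
      refine ⟨h0.1.const_smul (a i), ?_⟩
      rw [mellin_const_smul, h0.2, smul_eq_mul, mul_one_div]
    constructor
    · simpa only [MellinConvergent, smul_eq_mul] using hconv_f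
    · have heq : ∫ t in Set.Ioi (0:ℝ), (t : ℂ) ^ (z - 1) * f t
          = ∫ t in Set.Ioi (0:ℝ),
              ((t : ℂ) ^ (z - 1) • g t + (t : ℂ) ^ (z - 1) • (∑ i : Fin N, P i t)
                + (t : ℂ) ^ (z - 1) • fh t) := by
        refine setIntegral_congr_fun measurableSet_Ioi fun t ht => ?_
        rw [← smul_add, ← smul_add, ← hdecomp t ht, smul_eq_mul]
      have hI1 : Integrable
          (fun t : ℝ => (t : ℂ) ^ (z - 1) • g t + (t : ℂ) ^ (z - 1) • (∑ i : Fin N, P i t))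
          (volume.restrict (Set.Ioi 0)) := hconv_g.add hmelP.1
      have hIg : Integrable (fun t : ℝ => (t : ℂ) ^ (z - 1) • g t)
          (volume.restrict (Set.Ioi 0)) := hconv_g
      have hIP : Integrable (fun t : ℝ => (t : ℂ) ^ (z - 1) • (∑ i : Fin N, P i t))
          (volume.restrict (Set.Ioi 0)) := hmelP.1
      have hIfh : Integrable (fun t : ℝ => (t : ℂ) ^ (z - 1) • fh t)
          (volume.restrict (Set.Ioi 0)) := hconv_fh
      rw [heq, integral_add hI1 hIfh, integral_add hIg hIP]
      have : (∫ t in Set.Ioi (0:ℝ), (t : ℂ) ^ (z - 1) • (∑ i : Fin N, P i t))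
          = ∑ i : Fin N, a i / (z + (c i.castSucc : ℂ)) := hmelP.2
      rw [this]
      rfl
  · -- differentiability
    have hfun : (fun z : ℂ =>
        (mellin g z + (∑ i : Fin N, a i / (z + (c i.castSucc : ℂ))) + mellin fh z)
          - ∑ i : Fin N, a i / (z + (c i.castSucc : ℂ)))
        = fun z : ℂ => mellin g z + mellin fh z := by
      funext z; ring
    rw [hfun]
    intro z hz
    have hz' : -cN < z.re := hz
    have hdg : DifferentiableAt ℂ (mellin g) z :=
      mellin_differentiableAt_of_isBigO_rpow hgloc (hg_top (z.re + 1)) (lt_add_one _)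
        hg_bot hz'
    have hdfh : DifferentiableAt ℂ (mellin fh) z :=
      mellin_differentiableAt_of_isBigO_rpow_exp hδ hfhloc hfh_top hfh_bot hz'
    exact (hdg.add hdfh).differentiableWithinAt
end
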